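/- Let x ∈ {0,1}^m have run-length encoding (k_1, ..., k_ℓ) with ℓ ≥ 2, and let g(x) be the string with run-length encoding (k_1 + k_2, k_3, ..., k_ℓ). Then for n = m + 1, H_n(x) − H_n(g(x)) = [(k_1+1)log(1/(k_1+1)) + (k_2+1)log(1/(k_2+1)) − (k_1+k_2+1)log(1/(k_1+k_2+1))] / μ, up to the common normalization μ = 2n, and this difference is strictly positive. -/

import Mathlib

open scoped BigOperators

/-- The number of embeddings (masks) of `x` in `y`. -/
def wt (x y : List Bool) : ℕ := y.sublists.count x

/-- The Shannon entropy (base 2) of the normalized weight distribution `P_x` over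
supersequences `y ∈ {0,1}^n` of `x`, with total weight `μ = C(n,m)·2^{n-m}`
(for `n = m + 1` this is `2n`). -/
noncomputable def Hent (n : ℕ) (x : List Bool) : ℝ :=
  -∑ y : Fin n → Bool,
    ((wt x (List.ofFn y) : ℝ) / ((n.choose x.length * 2 ^ (n - x.length) : ℕ) : ℝ)) *
      Real.logb 2
        ((wt x (List.ofFn y) : ℝ) / ((n.choose x.length * 2 ^ (n - x.length) : ℕ) : ℝ))

namespace EDMX

lemma wt_eq_sublists' (x y : List Bool) : wt x y = y.sublists'.count x := by
  unfold wt
  rw [List.count_eq_countP, List.count_eq_countP]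
  exact (y.sublists_perm_sublists').countP_eq _

lemma count_map_cons (c : Bool) (x : List Bool) (L : List (List Bool)) :
    (L.map (List.cons c)).count (c :: x) = L.count x := by
  induction L with
  | nil => rfl
  | cons s L ih => simp [List.count_cons, ih, beq_iff_eq]

lemma wt_nil_left (y : List Bool) : wt [] y = 1 := by
  rw [wt_eq_sublists']
  induction y with
  | nil => rfl
  | cons c y ih =>
    rw [List.sublists'_cons, List.count_append, ih]
    have : List.count ([] : List Bool) (List.map (List.cons c) y.sublists') = 0 := by
      rw [List.count_eq_zero]
      simp
    omega

lemma wt_cons_cons (d c : Bool) (x y : List Bool) :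
    wt (d :: x) (c :: y) = wt (d :: x) y + if d = c then wt x y else 0 := by
  rw [wt_eq_sublists', wt_eq_sublists', List.sublists'_cons, List.count_append,
    ← wt_eq_sublists']
  congr 1
  by_cases h : d = c
  · subst h
    rw [if_pos rfl, wt_eq_sublists']
    exact count_map_cons _ _ _
  · rw [if_neg h, List.count_eq_zero]
    rintro hmem
    rcases List.mem_map.1 hmem with ⟨s, -, hs⟩
    apply h
    have := congrArg List.head? hs
    simpa using this.symm

lemma wt_zero_of_lt {x y : List Bool} (h : y.length < x.length) : wt x y = 0 := by
  rw [wt_eq_sublists', List.count_eq_zero]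
  intro hmem
  have := (List.mem_sublists'.1 hmem).length_le
  omega

lemma wt_eq_length {x y : List Bool} (h : x.length = y.length) :
    wt x y = if x = y then 1 else 0 := by
  induction y generalizing x with
  | nil =>
    have : x = [] := List.length_eq_zero_iff.1 h
    subst this; rfl
  | cons c y ih =>
    match x with
    | [] => simp at h
    | d :: x =>
      rw [wt_cons_cons]
      have hlen : y.length < (d :: x).length := by simp at h ⊢; omega
      rw [wt_zero_of_lt hlen]
      by_cases hdc : d = c
      · subst hdc
        rw [if_pos rfl, ih (by simpa using h)]
        by_cases hxy : x = y
        · subst hxy; simp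
        · simp [hxy]
      · simp [hdc]

lemma wt_self (x : List Bool) : wt x x = 1 := by
  rw [wt_eq_length rfl, if_pos rfl]

lemma wt_cons_self {z : List Bool} {a : Bool} (hz : z.head? ≠ some a) :
    wt z (a :: z) = 1 := by
  match z with
  | [] => rw [wt_eq_sublists']; rfl
  | c :: z =>
    rw [wt_cons_cons, wt_self, if_neg (fun h => hz (by simp [h]))]

noncomputable def cnt (x y : List Bool) : ℕ :=
  ∑ i ∈ Finset.range y.length, if y.eraseIdx i = x then 1 else 0

lemma wt_eq_cnt : ∀ {y x : List Bool}, y.length = x.length + 1 → wt x y = cnt x y := by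
  intro y
  induction y with
  | nil => intro x h; simp at h
  | cons c y ih =>
    intro x h
    match x with
    | [] =>
      have : y = [] := by simpa using h
      subst this
      simp [cnt, wt_nil_left]
    | d :: x =>
      have hlen : y.length = x.length + 1 := by simpa using h
      rw [wt_cons_cons, wt_eq_length (by simpa using hlen.symm), ih hlen]
      unfold cnt
      rw [List.length_cons, Finset.sum_range_succ']
      simp only [List.eraseIdx_cons_succ, List.eraseIdx_cons_zero]
      by_cases hdc : d = c
      · subst hdc
        simp only [if_pos rfl, List.cons.injEq, true_and]
        rw [add_comm]
        congr 1
        simp [eq_comm]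
        exact if_congr Iff.rfl rfl rfl
      · simp only [if_neg hdc]
        have h1 : (if d :: x = y then 1 else 0) = (if y = d :: x then 1 else 0) := by
          simp [eq_comm]
        have h2 : ∀ i, (if c :: y.eraseIdx i = d :: x then (1:ℕ) else 0) = 0 := by
          intro i
          rw [if_neg]
          intro hcon
          injection hcon with h1 h2
          exact hdc h1.symm
        simp only [h2, Finset.sum_const_zero, zero_add, h1, add_zero]
        rw [Finset.sum_eq_zero (fun i _ => by
          exact (if_congr Iff.rfl rfl rfl).trans (h2 i)), zero_add]
        exact if_congr Iff.rfl rfl rfl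

lemma insertIdx_eraseIdx_getD :
    ∀ (i : ℕ) (y : List Bool), i < y.length →
      (y.eraseIdx i).insertIdx i (y.getD i false) = y := by
  intro i
  induction i with
  | zero =>
    intro y hy
    match y with
    | c :: y => simp
  | succ i ih =>
    intro y hy
    match y with
    | c :: y =>
      simp only [List.eraseIdx_cons_succ, List.getD_cons_succ, List.insertIdx_succ_cons]
      rw [ih y (by simpa using hy)]

lemma insert_indicator {x y : List Bool} (h : y.length = x.length + 1) {i : ℕ}
    (hi : i < y.length) :
    (if y.eraseIdx i = x then (1:ℕ) else 0) =
      ∑ b : Bool, if x.insertIdx i b = y then 1 else 0 := by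
  have hix : i ≤ x.length := by omega
  by_cases he : y.eraseIdx i = x
  · rw [if_pos he]
    set b0 := y.getD i false with hb0
    have hkey : x.insertIdx i b0 = y := by rw [← he]; exact insertIdx_eraseIdx_getD i y hi
    have huniq : ∀ b : Bool, x.insertIdx i b = y → b = b0 := by
      intro b hb
      have : (x.insertIdx i b).getD i false = b := by
        rw [List.getD_eq_getElem _ _ (by rw [List.length_insertIdx_of_le_length hix]; omega)]
        exact List.getElem_insertIdx_self _
      rw [hb] at this
      rw [hb0, ← this]
    rcases hb : b0 with _ | _ <;>
    · rw [Fintype.sum_bool]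
      rw [hb] at hkey huniq
      simp only [if_pos hkey]
      rw [if_neg (fun hcon => by simpa using huniq _ hcon)]
  · rw [if_neg he]
    symm
    apply Finset.sum_eq_zero
    intro b _
    rw [if_neg]
    intro hb
    exact he (by rw [← hb]; exact List.eraseIdx_insertIdx_self _)

lemma cnt_eq_insert_sum {x y : List Bool} (h : y.length = x.length + 1) :
    cnt x y = ∑ i ∈ Finset.range y.length, ∑ b : Bool, if x.insertIdx i b = y then 1 else 0 := by
  unfold cnt
  apply Finset.sum_congr rfl
  intro i hi
  exact insert_indicator h (Finset.mem_range.1 hi)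


lemma ofFn_getD {n : ℕ} (l : List Bool) (h : l.length = n) :
    (List.ofFn fun j : Fin n => l.getD j false) = l := by
  apply List.ext_getElem
  · simp [h]
  · intro i h1 h2
    rw [List.getElem_ofFn]
    simp [List.getD, List.getElem?_eq_getElem h2]

lemma inner_eval {x : List Bool} {n : ℕ} (h : n = x.length + 1) {i : ℕ} (hi : i < n) (b : Bool)
    (F : List Bool → ℝ) :
    ∑ y : Fin n → Bool, (if x.insertIdx i b = List.ofFn y then (1:ℝ) else 0) * F (List.ofFn y)
      = F (x.insertIdx i b) := by
  have hlen : (x.insertIdx i b).length = n := by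
    rw [List.length_insertIdx_of_le_length (by omega)]; omega
  set y0 : Fin n → Bool := fun j => (x.insertIdx i b).getD j false with hy0
  have hofn : List.ofFn y0 = x.insertIdx i b := ofFn_getD _ hlen
  have hcond : ∀ y : Fin n → Bool, (x.insertIdx i b = List.ofFn y) ↔ y = y0 := by
    intro y
    constructor
    · intro hy
      funext j
      have hjlt : (j : ℕ) < (List.ofFn y).length := by simp
      have : (List.ofFn y).getD (j : ℕ) false = y j := by
        rw [List.getD_eq_getElem _ _ hjlt, List.getElem_ofFn]
      rw [hy0]
      simp only [← this, ← hy]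
    · rintro rfl
      exact hofn.symm
  simp only [hcond, ite_mul, one_mul, zero_mul]
  rw [Finset.sum_ite_eq' Finset.univ y0 (fun y => F (List.ofFn y))]
  rw [if_pos (Finset.mem_univ _), hofn]

lemma sum_fin_eq_insert (x : List Bool) (n : ℕ) (h : n = x.length + 1) (F : List Bool → ℝ) :
    ∑ y : Fin n → Bool, (wt x (List.ofFn y) : ℝ) * F (List.ofFn y)
      = ∑ i ∈ Finset.range n, ∑ b : Bool, F (x.insertIdx i b) := by
  have step1 : ∀ y : Fin n → Bool,
      (wt x (List.ofFn y) : ℝ) * F (List.ofFn y) =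
      ∑ i ∈ Finset.range n, ∑ b : Bool,
        (if x.insertIdx i b = List.ofFn y then (1:ℝ) else 0) * F (List.ofFn y) := by
    intro y
    have hylen : (List.ofFn y).length = x.length + 1 := by simp [← h]
    rw [wt_eq_cnt hylen, cnt_eq_insert_sum hylen]
    have : ((List.ofFn y).length) = n := by simp [← h]
    rw [this]
    push_cast
    rw [Finset.sum_mul]
    apply Finset.sum_congr rfl
    intro i _
    rw [Finset.sum_mul]
  simp only [step1]
  rw [Finset.sum_comm]
  apply Finset.sum_congr rfl
  intro i hi
  rw [Finset.sum_comm]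
  apply Finset.sum_congr rfl
  intro b _
  exact inner_eval h (Finset.mem_range.1 hi) b F


open List

lemma rep_merge (a : Bool) (i j : ℕ) (z : List Bool) :
    replicate i a ++ a :: (replicate j a ++ z) = replicate (i + j + 1) a ++ z := by
  rw [show i + j + 1 = i + (j+1) by omega, replicate_add, append_assoc, replicate_succ]
  simp

lemma wt_run_ext (a : Bool) (kk : ℕ) (z : List Bool) (hz : z.head? ≠ some a) :
    wt (replicate kk a ++ z) (replicate (kk+1) a ++ z) = kk + 1 := by
  induction kk with
  | zero => simpa [replicate_succ] using wt_cons_self hz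
  | succ kk ih =>
    rw [replicate_succ (a := a) (n := kk+1), replicate_succ (a := a) (n := kk), cons_append, cons_append,
      wt_cons_cons, if_pos rfl, ← cons_append, ← replicate_succ, ih]
    have : wt (replicate (kk+1) a ++ z) (replicate (kk+1) a ++ z) = 1 := wt_self _
    omega

lemma wt_strip (a : Bool) (kk : ℕ) (z w : List Bool)
    (hw : w.head? ≠ some a) (hlw : w.length = z.length + 1) :
    wt (replicate kk a ++ z) (replicate kk a ++ w) = wt z w := by
  induction kk with
  | zero => simp
  | succ kk ih =>
    rw [replicate_succ, cons_append, cons_append, wt_cons_cons, if_pos rfl, ih]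
    have hlen : (replicate (kk+1) a ++ z).length = (replicate kk a ++ w).length := by
      simp only [length_append, length_replicate, hlw]; omega
    rw [show (a :: (replicate kk a ++ z)) = replicate (kk+1) a ++ z by
      rw [replicate_succ, cons_append]]
    rw [wt_eq_length hlen, if_neg]
    · omega
    · intro hcon
      rw [show replicate (kk+1) a ++ z = replicate kk a ++ (a :: z) by
        rw [replicate_succ', append_assoc, singleton_append]] at hcon
      have := append_cancel_left hcon
      exact hw (by rw [← this]; rfl)

lemma wt_newrun (a b : Bool) (hb : b ≠ a) :
    ∀ (i kk : ℕ), i < kk → ∀ z : List Bool,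
      wt (replicate kk a ++ z) (replicate i a ++ b :: (replicate (kk - i) a ++ z)) = 1 := by
  intro i
  induction i with
  | zero =>
    intro kk hkk z
    obtain ⟨k', rfl⟩ : ∃ k', kk = k' + 1 := ⟨kk - 1, by omega⟩
    simp only [replicate_zero, nil_append, Nat.sub_zero]
    rw [show replicate (k'+1) a ++ z = a :: (replicate k' a ++ z) by
      rw [replicate_succ, cons_append]]
    rw [wt_cons_cons, if_neg (fun h => hb h.symm), wt_self]
  | succ i ih =>
    intro kk hkk z
    obtain ⟨k', rfl⟩ : ∃ k', kk = k' + 1 := ⟨kk - 1, by omega⟩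
    have hik : i < k' := by omega
    rw [show k' + 1 - (i+1) = k' - i by omega]
    rw [replicate_succ (a := a) (n := k'), replicate_succ (a := a) (n := i), cons_append, cons_append, wt_cons_cons,
      if_pos rfl, ih k' hik z]
    have hlen : (replicate (k'+1) a ++ z).length
        = (replicate i a ++ b :: (replicate (k' - i) a ++ z)).length := by
      simp only [length_append, length_replicate, length_cons]; omega
    rw [show (a :: (replicate k' a ++ z)) = replicate (k'+1) a ++ z by
      rw [replicate_succ, cons_append]]
    have hne : replicate (k'+1) a ++ z ≠ replicate i a ++ b :: (replicate (k' - i) a ++ z) := by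
      intro hcon
      rw [show replicate (k'+1) a ++ z
          = replicate i a ++ (replicate (k' + 1 - i) a ++ z) by
        rw [← append_assoc, ← replicate_add]; congr 2; omega] at hcon
      have h2 := append_cancel_left hcon
      rw [show k' + 1 - i = (k' - i) + 1 by omega, replicate_succ, cons_append] at h2
      exact hb (by injection h2 with h3 _; exact h3.symm)
    rw [wt_eq_length hlen, if_neg hne]

lemma insertIdx_rep (b a : Bool) :
    ∀ (i kk : ℕ), i ≤ kk → ∀ z : List Bool,
      (replicate kk a ++ z).insertIdx i b
        = replicate i a ++ b :: (replicate (kk - i) a ++ z) := by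
  intro i
  induction i with
  | zero => intro kk _ z; simp
  | succ i ih =>
    intro kk hkk z
    obtain ⟨k', rfl⟩ : ∃ k', kk = k' + 1 := ⟨kk - 1, by omega⟩
    rw [replicate_succ (a := a) (n := k'), cons_append, insertIdx_succ_cons, ih k' (by omega) z,
      show k' + 1 - (i+1) = k' - i by omega, replicate_succ (a := a) (n := i), cons_append]

lemma insertIdx_append_right (b : Bool) :
    ∀ (w z : List Bool) (t : ℕ),
      (w ++ z).insertIdx (w.length + t) b = w ++ z.insertIdx t b := by
  intro w
  induction w with
  | nil => intro z t; simp
  | cons c w ih =>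
    intro z t
    rw [cons_append, length_cons,
      show w.length + 1 + t = (w.length + t) + 1 by omega, insertIdx_succ_cons, ih, cons_append]

lemma sum_range_add' (f : ℕ → ℝ) (A B : ℕ) :
    ∑ i ∈ Finset.range (A+B), f i
      = ∑ i ∈ Finset.range A, f i + ∑ t ∈ Finset.range B, f (A+t) := by
  induction B with
  | zero => simp
  | succ B ih => rw [show A + (B+1) = (A+B)+1 by omega, Finset.sum_range_succ, ih,
      Finset.sum_range_succ, add_assoc]

noncomputable def S' (w : List Bool) : ℝ :=
  ∑ i ∈ Finset.range (w.length + 1), ∑ b : Bool,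
    Real.logb 2 ((wt w (w.insertIdx i b) : ℕ) : ℝ)

lemma S'_append_run (a : Bool) (kk : ℕ) (hkk : 1 ≤ kk) (z : List Bool)
    (hz : z.head? ≠ some a) :
    S' (replicate kk a ++ z) = ((kk:ℝ)+1) * Real.logb 2 ((kk:ℝ)+1) + S' z := by
  set x := replicate kk a ++ z with hxdef
  set L := Real.logb 2 ((kk:ℝ)+1) with hL
  have hxlen : x.length = kk + z.length := by simp [hxdef]
  have hcast : ∀ n : ℕ, (((n+1 : ℕ)) : ℝ) = (n:ℝ)+1 := by intro n; push_cast; ring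
  have hA : ∀ i, i < kk → ∀ b : Bool,
      Real.logb 2 ((wt x (x.insertIdx i b) : ℕ) : ℝ) = if b = a then L else 0 := by
    intro i hi b
    rw [hxdef, insertIdx_rep b a i kk (le_of_lt hi) z]
    by_cases hba : b = a
    · rw [hba, if_pos rfl, rep_merge, show i + (kk - i) + 1 = kk + 1 by omega,
        wt_run_ext a kk z hz, hcast, hL]
    · rw [if_neg hba, wt_newrun a b hba i kk hi z]
      simp
  have hB0 : ∀ b : Bool, x.insertIdx kk b = replicate kk a ++ (b :: z) := by
    intro b
    have h := insertIdx_append_right b (replicate kk a) z 0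
    rw [length_replicate, Nat.add_zero, insertIdx_zero] at h
    rw [hxdef]; exact h
  have hBa : Real.logb 2 ((wt x (x.insertIdx kk a) : ℕ) : ℝ) = L := by
    rw [hB0 a, hxdef, show replicate kk a ++ (a :: z) = replicate (kk+1) a ++ z by
      rw [replicate_succ', append_assoc, singleton_append], wt_run_ext a kk z hz, hcast, hL]
  have hBb : ∀ b : Bool, b ≠ a →
      Real.logb 2 ((wt x (x.insertIdx kk b) : ℕ) : ℝ)
        = Real.logb 2 ((wt z (z.insertIdx 0 b) : ℕ) : ℝ) := by
    intro b hba
    rw [hB0 b, hxdef, wt_strip a kk z (b :: z) (by simp [hba]) (by simp), insertIdx_zero]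
  have hC : ∀ t, 1 ≤ t → t ≤ z.length → ∀ b : Bool,
      Real.logb 2 ((wt x (x.insertIdx (kk + t) b) : ℕ) : ℝ)
        = Real.logb 2 ((wt z (z.insertIdx t b) : ℕ) : ℝ) := by
    intro t ht1 ht2 b
    have h := insertIdx_append_right b (replicate kk a) z t
    rw [length_replicate] at h
    rw [hxdef, h]
    rw [wt_strip a kk z _ _ (by rw [length_insertIdx_of_le_length ht2])]
    obtain ⟨c, z', rfl⟩ : ∃ c z', z = c :: z' := by
      cases z with
      | nil => simp at ht2; omega
      | cons c z' => exact ⟨c, z', rfl⟩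
    obtain ⟨t', rfl⟩ : ∃ t', t = t' + 1 := ⟨t - 1, by omega⟩
    rw [insertIdx_succ_cons]
    simpa using hz
  have hza : Real.logb 2 ((wt z (z.insertIdx 0 a) : ℕ) : ℝ) = 0 := by
    rw [insertIdx_zero, wt_cons_self hz]; simp
  have hg0 : (∑ b : Bool, Real.logb 2 ((wt x (x.insertIdx kk b) : ℕ) : ℝ))
      = L + ∑ b : Bool, Real.logb 2 ((wt z (z.insertIdx 0 b) : ℕ) : ℝ) := by
    rw [Fintype.sum_bool, Fintype.sum_bool]
    cases a
    · rw [hBa, hBb true (by simp), hza]; ring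
    · rw [hBa, hBb false (by simp), hza]; ring
  -- assemble
  unfold S'
  rw [hxlen, show kk + z.length + 1 = kk + (z.length + 1) by omega,
    sum_range_add']
  have hfirst : ∑ i ∈ Finset.range kk, (∑ b : Bool,
      Real.logb 2 ((wt x (x.insertIdx i b) : ℕ) : ℝ)) = kk * L := by
    rw [Finset.sum_congr rfl (fun i hi => ?_), Finset.sum_const, Finset.card_range,
      nsmul_eq_mul]
    rw [Finset.sum_congr rfl (fun b _ => hA i (Finset.mem_range.1 hi) b)]
    rw [Fintype.sum_bool]
    cases a <;> simp
  rw [hfirst, Finset.sum_range_succ']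
  have htail : ∑ t ∈ Finset.range z.length, (∑ b : Bool,
      Real.logb 2 ((wt x (x.insertIdx (kk + (t+1)) b) : ℕ) : ℝ))
      = ∑ t ∈ Finset.range z.length, (∑ b : Bool,
      Real.logb 2 ((wt z (z.insertIdx (t+1) b) : ℕ) : ℝ)) := by
    apply Finset.sum_congr rfl
    intro t ht
    apply Finset.sum_congr rfl
    intro b _
    exact hC (t+1) (by omega) (by have := Finset.mem_range.1 ht; omega) b
  rw [htail, Nat.add_zero, hg0]
  rw [Finset.sum_range_succ'
    (fun i => ∑ b : Bool, Real.logb 2 ((wt z (z.insertIdx i b) : ℕ) : ℝ)) z.length]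
  push_cast
  ring


noncomputable def flat (rs : List (Bool × ℕ)) : List Bool :=
  (rs.map fun p => List.replicate p.2 p.1).flatten

lemma S'_nil : S' [] = 0 := by
  unfold S'
  rw [show List.length ([] : List Bool) + 1 = 1 from rfl, Finset.sum_range_one,
    Fintype.sum_bool]
  simp [wt_nil_left]

lemma S'_flat (rs : List (Bool × ℕ)) (hk : ∀ p ∈ rs, 1 ≤ p.2)
    (hc : rs.Chain' (fun p q => p.1 ≠ q.1)) :
    S' (flat rs) = ((rs.map fun p => ((p.2:ℝ)+1) * Real.logb 2 ((p.2:ℝ)+1))).sum := by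
  induction rs with
  | nil => simpa [flat] using S'_nil
  | cons p rs ih =>
    have hflat : flat (p :: rs) = List.replicate p.2 p.1 ++ flat rs := by
      simp [flat]
    have hhead : (flat rs).head? ≠ some p.1 := by
      cases rs with
      | nil => simp [flat]
      | cons q rs' =>
        have h1 : p.1 ≠ q.1 := (List.isChain_cons_cons.1 hc).1
        obtain ⟨t, ht⟩ : ∃ t, q.2 = t + 1 :=
          ⟨q.2 - 1, by have := hk q (by simp); omega⟩
        simp only [flat, List.map_cons, List.flatten_cons, ht, List.replicate_succ,
          List.cons_append, List.head?_cons]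
        exact fun hcon => h1 (by injection hcon with h2; exact h2.symm)
    rw [hflat, S'_append_run p.1 p.2 (hk p (by simp)) _ hhead,
      ih (fun q hq => hk q (by simp [hq])) hc.tail, List.map_cons, List.sum_cons]


lemma key_log (p q : ℝ) (hp : 2 ≤ p) (hq : 2 ≤ q) :
    p * Real.log p + q * Real.log q < (p + q - 1) * Real.log (p + q - 1) := by
  set s := p + q - 1 with hs
  have hs1 : (1:ℝ) < s := by simp [hs]; linarith
  have hsp : p < s := by simp [hs]; linarith
  have hsq : q < s := by simp [hs]; linarith
  have hden : s - 1 ≠ 0 := by linarith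
  have hconv := Real.strictConvexOn_mul_log
  have habp : (s - p)/(s-1) + (p-1)/(s-1) = 1 := by field_simp; ring
  have habq : (s - q)/(s-1) + (q-1)/(s-1) = 1 := by field_simp; ring
  have hcombp : (s - p)/(s-1) * 1 + (p-1)/(s-1) * s = p := by field_simp; ring
  have hcombq : (s - q)/(s-1) * 1 + (q-1)/(s-1) * s = q := by field_simp; ring
  have hp' := hconv.2 (Set.mem_Ici.2 (by norm_num : (0:ℝ) ≤ 1))
    (Set.mem_Ici.2 (by linarith : (0:ℝ) ≤ s)) (by linarith : (1:ℝ) ≠ s)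
    (div_pos (by linarith) (by linarith)) (div_pos (by linarith) (by linarith)) habp
  have hq' := hconv.2 (Set.mem_Ici.2 (by norm_num : (0:ℝ) ≤ 1))
    (Set.mem_Ici.2 (by linarith : (0:ℝ) ≤ s)) (by linarith : (1:ℝ) ≠ s)
    (div_pos (by linarith) (by linarith)) (div_pos (by linarith) (by linarith)) habq
  simp only [smul_eq_mul] at hp' hq'
  rw [hcombp] at hp'
  rw [hcombq] at hq'
  simp only [Real.log_one, mul_zero, mul_one, zero_add] at hp' hq'
  have hfac : (0:ℝ) < s - 1 := by linarith
  rw [div_mul_eq_mul_div, lt_div_iff₀ hfac] at hp' hq'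
  have h3 : (p * Real.log p + q * Real.log q) * (s-1) < (s * Real.log s) * (s-1) := by
    have heq : (p-1) * (s * Real.log s) + (q-1) * (s * Real.log s)
        = (s * Real.log s) * (s-1) := by rw [hs]; ring
    linarith
  exact lt_of_mul_lt_mul_right h3 (le_of_lt hfac)

lemma key_pos (p q : ℝ) (hp : 2 ≤ p) (hq : 2 ≤ q) :
    0 < (p + q - 1) * Real.logb 2 (p + q - 1) - p * Real.logb 2 p - q * Real.logb 2 q := by
  have h2 : (0:ℝ) < Real.log 2 := Real.log_pos (by norm_num)
  have key := key_log p q hp hq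
  have : (p+q-1) * Real.logb 2 (p+q-1) - p * Real.logb 2 p - q * Real.logb 2 q
      = ((p+q-1) * Real.log (p+q-1) - p * Real.log p - q * Real.log q) / Real.log 2 := by
    rw [Real.logb, Real.logb, Real.logb]
    field_simp
  rw [this]
  apply div_pos _ h2
  linarith


lemma Hent_eq (x : List Bool) (m : ℕ) (hlx : x.length = m) :
    Hent (m+1) x = Real.logb 2 (2*((m:ℝ)+1)) - S' x / (2*((m:ℝ)+1)) := by
  set μ : ℝ := 2*((m:ℝ)+1) with hμ
  have hμ0 : 0 < μ := by rw [hμ]; positivity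
  have hμℕ : (((m+1).choose x.length * 2 ^ (m + 1 - x.length) : ℕ) : ℝ) = μ := by
    rw [hlx, show m + 1 - m = 1 by omega, Nat.choose_succ_self_right]
    push_cast
    rw [hμ]; ring
  have htot : ∑ y : Fin (m+1) → Bool, (wt x (List.ofFn y) : ℝ) = μ := by
    have := sum_fin_eq_insert x (m+1) (by omega) (fun _ => 1)
    simp only [mul_one] at this
    rw [this]
    simp [hμ]
    ring
  have hT : ∑ y : Fin (m+1) → Bool,
      (wt x (List.ofFn y) : ℝ) * Real.logb 2 ((wt x (List.ofFn y) : ℝ)) = S' x := by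
    have := sum_fin_eq_insert x (m+1) (by omega)
      (fun l => Real.logb 2 ((wt x l : ℕ) : ℝ))
    rw [this, S', hlx]
  unfold Hent
  rw [hμℕ]
  have hterm : ∀ y : Fin (m+1) → Bool,
      ((wt x (List.ofFn y) : ℝ)/μ) * Real.logb 2 ((wt x (List.ofFn y) : ℝ)/μ)
      = ((wt x (List.ofFn y) : ℝ) * Real.logb 2 ((wt x (List.ofFn y) : ℝ)))/μ
        - ((wt x (List.ofFn y) : ℝ)/μ) * Real.logb 2 μ := by
    intro y
    rcases eq_or_ne ((wt x (List.ofFn y) : ℝ)) 0 with h | h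
    · rw [h]; norm_num
    · rw [Real.logb_div h (ne_of_gt hμ0)]; ring
  rw [Finset.sum_congr rfl (fun y _ => hterm y), Finset.sum_sub_distrib,
    ← Finset.sum_div, hT, ← Finset.sum_mul, ← Finset.sum_div, htot,
    div_self (ne_of_gt hμ0), one_mul]
  ring


lemma chain'_ofFn {α : Type*} {n : ℕ} (f : Fin n → α) (R : α → α → Prop)
    (h : ∀ (i : ℕ) (h1 : i < n) (h2 : i+1 < n), R (f ⟨i, h1⟩) (f ⟨i+1, h2⟩)) :
    (List.ofFn f).Chain' R := by
  show List.IsChain R _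
  rw [List.isChain_iff_getElem]
  intro i hi
  rw [List.getElem_ofFn, List.getElem_ofFn]
  simp only [List.length_ofFn] at hi
  exact h i (by omega) (by omega)


end EDMX

set_option maxHeartbeats 2000000 in
open EDMX in
/-- Single-deletion entropy drop under the run-merging operation `g`: if `x` has
run-length encoding `(k_1, …, k_ℓ)` with `ℓ ≥ 2` and `g(x)` has run-length encoding
`(k_1 + k_2, k_3, …, k_ℓ)`, then for `n = m + 1`,
`H_n(x) - H_n(g(x)) = [(k₁+k₂+1)log(k₁+k₂+1) - (k₁+1)log(k₁+1) - (k₂+1)log(k₂+1)]/(2n)`,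
and this difference is strictly positive. -/
theorem entropy_drop_merge (ℓ : ℕ) (hl : 2 ≤ ℓ) (a : Fin ℓ → Bool) (k : Fin ℓ → ℕ)
    (halt : ∀ i : Fin ℓ, ∀ h : i.1 + 1 < ℓ, a i ≠ a ⟨i.1 + 1, h⟩)
    (hk : ∀ i, 1 ≤ k i) (m : ℕ) (hm : ∑ i, k i = m)
    (x gx : List Bool)
    (hx : x = (List.ofFn fun i => List.replicate (k i) (a i)).flatten)
    (hgx : gx = (List.ofFn fun j : Fin (ℓ - 1) =>
        List.replicate
          (if j.1 = 0 then k ⟨0, by omega⟩ + k ⟨1, by omega⟩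
           else k ⟨j.1 + 1, by have := j.isLt; omega⟩)
          (a ⟨j.1 + 1, by have := j.isLt; omega⟩)).flatten) :
    Hent (m + 1) x - Hent (m + 1) gx =
      (((k ⟨0, by omega⟩ : ℝ) + (k ⟨1, by omega⟩ : ℝ) + 1) *
          Real.logb 2 ((k ⟨0, by omega⟩ : ℝ) + (k ⟨1, by omega⟩ : ℝ) + 1) -
        ((k ⟨0, by omega⟩ : ℝ) + 1) * Real.logb 2 ((k ⟨0, by omega⟩ : ℝ) + 1) -
        ((k ⟨1, by omega⟩ : ℝ) + 1) * Real.logb 2 ((k ⟨1, by omega⟩ : ℝ) + 1)) /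
        (2 * (m + 1)) ∧
    0 < Hent (m + 1) x - Hent (m + 1) gx := by
  obtain ⟨l', rfl⟩ : ∃ l', ℓ = l' + 2 := ⟨ℓ - 2, by omega⟩
  set F : ℕ → ℝ := fun t => ((t:ℝ)+1) * Real.logb 2 ((t:ℝ)+1) with hF
  set k0 : ℕ := k ⟨0, by omega⟩ with hk0
  set k1 : ℕ := k ⟨1, by omega⟩ with hk1
  -- run lists
  set rsx : List (Bool × ℕ) := List.ofFn (fun i => (a i, k i)) with hrsx
  set W : Fin (l' + 1) → ℕ := fun j =>
    if j.1 = 0 then k0 + k1 else k ⟨j.1 + 1, by have := j.isLt; omega⟩ with hW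
  set A : Fin (l' + 1) → Bool := fun j => a ⟨j.1 + 1, by have := j.isLt; omega⟩ with hA
  set rsg : List (Bool × ℕ) := List.ofFn (fun j => (A j, W j)) with hrsg
  have hxflat : x = flat rsx := by
    rw [hx, flat, hrsx, List.map_ofFn]
    rfl
  have hgxflat : gx = flat rsg := by
    rw [hgx, flat, hrsg, List.map_ofFn]
    rfl
  -- lengths
  have hzero : k (0 : Fin (l'+2)) = k0 := by
    rw [hk0]; congr 1
  have hone : k (0 : Fin (l'+1)).succ = k1 := by
    rw [hk1]; exact congrArg k (Fin.ext (by simp))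
  have hxlen : x.length = m := by
    rw [hxflat]
    simp only [flat, hrsx, List.map_ofFn, List.length_flatten, List.sum_ofFn,
      Function.comp, List.length_replicate]
    exact hm
  have hW0 : W 0 = k0 + k1 := by simp [hW]
  have hWs : ∀ j : Fin l', W j.succ = k j.succ.succ := by
    intro j
    simp only [hW, Fin.val_succ]
    rw [if_neg (by omega)]
    congr 1
  have hWsum : ∑ j : Fin (l'+1), W j = ∑ i : Fin (l'+2), k i := by
    rw [Fin.sum_univ_succ (f := fun j : Fin (l'+1) => W j),
      Fin.sum_univ_succ (f := fun i : Fin (l'+2) => k i),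
      Fin.sum_univ_succ (f := fun i : Fin (l'+1) => k i.succ)]
    rw [hW0, Finset.sum_congr rfl (fun j _ => hWs j), hone, hzero]
    ring
  have hgxlen : gx.length = m := by
    rw [hgxflat]
    simp only [flat, hrsg, List.map_ofFn, List.length_flatten, List.sum_ofFn,
      Function.comp, List.length_replicate]
    rw [hWsum, hm]
  -- chains and positivity of runs
  have hkx : ∀ p ∈ rsx, 1 ≤ p.2 := by
    rw [hrsx]
    intro p hp
    rcases List.mem_ofFn.1 hp with ⟨i, rfl⟩
    exact hk i
  have hkg : ∀ p ∈ rsg, 1 ≤ p.2 := by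
    rw [hrsg]
    intro p hp
    rcases List.mem_ofFn.1 hp with ⟨j, rfl⟩
    simp only [hW]
    by_cases h : j.1 = 0
    · rw [if_pos h]; have := hk ⟨0, by omega⟩; omega
    · rw [if_neg h]; exact hk _
  have hcx : rsx.Chain' (fun p q => p.1 ≠ q.1) := by
    rw [hrsx]
    exact chain'_ofFn _ _ (fun i h1 h2 => halt ⟨i, h1⟩ h2)
  have hcg : rsg.Chain' (fun p q => p.1 ≠ q.1) := by
    rw [hrsg]
    exact chain'_ofFn _ _ (fun i h1 h2 => halt ⟨i+1, by omega⟩ (by show i+1+1 < l'+2; omega))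
  -- entropy values
  have hSx : S' x = ∑ i : Fin (l'+2), F (k i) := by
    rw [hxflat, S'_flat rsx hkx hcx, hrsx, List.map_ofFn, List.sum_ofFn]
    rfl
  have hSg : S' gx = ∑ j : Fin (l'+1), F (W j) := by
    rw [hgxflat, S'_flat rsg hkg hcg, hrsg, List.map_ofFn, List.sum_ofFn]
    rfl
  have hdiffS : S' gx - S' x = F (k0 + k1) - F k0 - F k1 := by
    rw [hSx, hSg]
    rw [Fin.sum_univ_succ (f := fun j : Fin (l'+1) => F (W j)),
      Fin.sum_univ_succ (f := fun i : Fin (l'+2) => F (k i)),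
      Fin.sum_univ_succ (f := fun i : Fin (l'+1) => F (k i.succ))]
    rw [hW0, hone, hzero, Finset.sum_congr rfl (fun j _ => congrArg F (hWs j))]
    ring
  have hHx := Hent_eq x m hxlen
  have hHg := Hent_eq gx m hgxlen
  have hμ0 : (0:ℝ) < 2*((m:ℝ)+1) := by positivity
  have hdiff : Hent (m+1) x - Hent (m+1) gx
      = (F (k0 + k1) - F k0 - F k1) / (2*((m:ℝ)+1)) := by
    rw [hHx, hHg, ← hdiffS]
    ring
  have hnum : F (k0 + k1) - F k0 - F k1
      = (((k0:ℝ) + (k1:ℝ) + 1) * Real.logb 2 ((k0:ℝ) + (k1:ℝ) + 1) -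
        ((k0:ℝ) + 1) * Real.logb 2 ((k0:ℝ) + 1) -
        ((k1:ℝ) + 1) * Real.logb 2 ((k1:ℝ) + 1)) := by
    rw [hF]
    push_cast
    ring
  have hpos : 0 < F (k0 + k1) - F k0 - F k1 := by
    have hk0' : (1:ℝ) ≤ (k0:ℝ) := by
      have := hk ⟨0, by omega⟩; rw [← hk0] at this; exact_mod_cast this
    have hk1' : (1:ℝ) ≤ (k1:ℝ) := by
      have := hk ⟨1, by omega⟩; rw [← hk1] at this; exact_mod_cast this
    have := key_pos ((k0:ℝ)+1) ((k1:ℝ)+1) (by linarith) (by linarith)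
    rw [hnum]
    have harg : ((k0:ℝ)+1) + ((k1:ℝ)+1) - 1 = (k0:ℝ) + (k1:ℝ) + 1 := by ring
    rw [harg] at this
    linarith
  constructor
  · rw [hdiff, hnum]
  · rw [hdiff]
    exact div_pos hpos hμ0
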